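/- Let M be a Γ-semiring and B a bi-Γ-ideal of M. Then B is a minimal generalized bi-Γ-ideal of M if and only if B, regarded as a Γ-semiring, is GB-simple. -/
import Mathlib


/-- A Γ-semiring: additive commutative semigroups `M` and `G` with a triple
product `M → G → M → M` satisfying distributivity and associativity laws. -/
structure GammaSemiring (M G : Type*) [AddCommSemigroup M] [AddCommSemigroup G] where
  tmul : M → G → M → M
  left_distrib : ∀ a γ b c, tmul a γ (b + c) = tmul a γ b + tmul a γ c
  right_distrib : ∀ a b γ c, tmul (a + b) γ c = tmul a γ c + tmul b γ c
  gamma_distrib : ∀ a γ δ b, tmul a (γ + δ) b = tmul a γ b + tmul a δ b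
  mul_assoc : ∀ a γ b δ c, tmul (tmul a γ b) δ c = tmul a γ (tmul b δ c)

namespace GammaSemiring

variable {M G : Type*} [AddCommSemigroup M] [AddCommSemigroup G]

/-- `AΓB`: the set of all finite (nonempty) sums `Σᵢ aᵢγᵢbᵢ` with `aᵢ ∈ A`,
`γᵢ ∈ Γ`, `bᵢ ∈ B`, realized as the additive subsemigroup closure of the set
of single products. -/
def sprod (gs : GammaSemiring M G) (A B : Set M) : Set M :=
  (AddSubsemigroup.closure {x | ∃ a ∈ A, ∃ γ : G, ∃ b ∈ B, x = gs.tmul a γ b} :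
    AddSubsemigroup M)

/-- A generalized bi-Γ-ideal of `M`: a nonempty subset `A` with `AΓMΓA ⊆ A`. -/
def IsGenBiIdeal (gs : GammaSemiring M G) (A : Set M) : Prop :=
  A.Nonempty ∧ gs.sprod (gs.sprod A Set.univ) A ⊆ A

/-- A sub-Γ-semiring: nonempty, closed under addition and the Γ-product. -/
def IsSubGammaSemiring (gs : GammaSemiring M G) (T : Set M) : Prop :=
  T.Nonempty ∧ (∀ a ∈ T, ∀ b ∈ T, a + b ∈ T) ∧
    ∀ a ∈ T, ∀ γ : G, ∀ b ∈ T, gs.tmul a γ b ∈ T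

/-- A generalized bi-Γ-ideal of the Γ-semiring `T` (a subset of `M`):
a nonempty subset `A ⊆ T` with `AΓTΓA ⊆ A`. -/
def IsGenBiIdealIn (gs : GammaSemiring M G) (T A : Set M) : Prop :=
  A.Nonempty ∧ A ⊆ T ∧ gs.sprod (gs.sprod A T) A ⊆ A

/-- A Γ-ideal of `M`. -/
def IsGammaIdeal (gs : GammaSemiring M G) (A : Set M) : Prop :=
  A.Nonempty ∧ (∀ a ∈ A, ∀ b ∈ A, a + b ∈ A) ∧
    ∀ a ∈ A, ∀ γ : G, ∀ x : M, gs.tmul x γ a ∈ A ∧ gs.tmul a γ x ∈ A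

/-- A quasi-Γ-ideal of `M`: a sub-Γ-semiring `A` with `AΓM ∩ MΓA ⊆ A`. -/
def IsQuasiGammaIdeal (gs : GammaSemiring M G) (A : Set M) : Prop :=
  gs.IsSubGammaSemiring A ∧ gs.sprod A Set.univ ∩ gs.sprod Set.univ A ⊆ A

/-- A bi-Γ-ideal of `M`: a sub-Γ-semiring `A` with `AΓMΓA ⊆ A`. -/
def IsBiIdeal (gs : GammaSemiring M G) (A : Set M) : Prop :=
  gs.IsSubGammaSemiring A ∧ gs.sprod (gs.sprod A Set.univ) A ⊆ A

/-- `M` is GB-simple: `M` is its unique generalized bi-Γ-ideal. -/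
def GBSimple (gs : GammaSemiring M G) : Prop :=
  ∀ A : Set M, gs.IsGenBiIdeal A → A = Set.univ

/-- The sub-Γ-semiring `T`, regarded as a Γ-semiring, is GB-simple. -/
def GBSimpleIn (gs : GammaSemiring M G) (T : Set M) : Prop :=
  ∀ A : Set M, gs.IsGenBiIdealIn T A → A = T

end GammaSemiring

open GammaSemiring

variable {M G : Type*} [AddCommSemigroup M] [AddCommSemigroup G]

namespace GammaSemiring

private lemma mem_sprod (gs : GammaSemiring M G) {A B : Set M} {a b : M} (ha : a ∈ A)
    (γ : G) (hb : b ∈ B) : gs.tmul a γ b ∈ gs.sprod A B :=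
  AddSubsemigroup.subset_closure ⟨a, ha, γ, b, hb, rfl⟩

private lemma sprod_add (gs : GammaSemiring M G) {A B : Set M} {x y : M}
    (hx : x ∈ gs.sprod A B) (hy : y ∈ gs.sprod A B) : x + y ∈ gs.sprod A B :=
  AddSubsemigroup.add_mem _ hx hy

private lemma sprod_mono (gs : GammaSemiring M G) {A A' B B' : Set M} (hA : A ⊆ A')
    (hB : B ⊆ B') : gs.sprod A B ⊆ gs.sprod A' B' := by
  apply AddSubsemigroup.closure_mono
  rintro x ⟨a, ha, γ, b, hb, rfl⟩
  exact ⟨a, hA ha, γ, b, hB hb, rfl⟩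

private lemma sprod_nonempty (gs : GammaSemiring M G) [Nonempty G] {A B : Set M}
    (hA : A.Nonempty) (hB : B.Nonempty) : (gs.sprod A B).Nonempty := by
  obtain ⟨a, ha⟩ := hA
  obtain ⟨b, hb⟩ := hB
  obtain ⟨γ⟩ : Nonempty G := inferInstance
  exact ⟨gs.tmul a γ b, gs.mem_sprod ha γ hb⟩

private lemma sprod_empty_of_isEmpty (gs : GammaSemiring M G) [IsEmpty G] (A B : Set M) :
    gs.sprod A B = ∅ := by
  have : {x | ∃ a ∈ A, ∃ γ : G, ∃ b ∈ B, x = gs.tmul a γ b} = ∅ := by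
    ext x
    simp only [Set.mem_setOf_eq, Set.mem_empty_iff_false, iff_false]
    rintro ⟨a, -, γ, -⟩
    exact IsEmpty.false γ
  unfold sprod
  rw [this, AddSubsemigroup.closure_empty]
  rfl

private lemma sprod_subset_left (gs : GammaSemiring M G) {A B C : Set M} :
    gs.sprod (gs.sprod A B) C ⊆ gs.sprod A (gs.sprod B C) := by
  intro x hx
  refine AddSubsemigroup.closure_induction
    (p := fun x _ => x ∈ gs.sprod A (gs.sprod B C)) ?_ ?_ hx
  · rintro _ ⟨s, hs, γ, c, hc, rfl⟩
    refine AddSubsemigroup.closure_induction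
      (p := fun s _ => gs.tmul s γ c ∈ gs.sprod A (gs.sprod B C)) ?_ ?_ hs
    · rintro _ ⟨a, ha, δ, b, hb, rfl⟩
      rw [gs.mul_assoc]
      exact gs.mem_sprod ha δ (gs.mem_sprod hb γ hc)
    · intro s t _ _ hps hpt
      rw [gs.right_distrib]
      exact gs.sprod_add hps hpt
  · intro x y _ _ hpx hpy
    exact gs.sprod_add hpx hpy

private lemma sprod_subset_right (gs : GammaSemiring M G) {A B C : Set M} :
    gs.sprod A (gs.sprod B C) ⊆ gs.sprod (gs.sprod A B) C := by
  intro x hx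
  refine AddSubsemigroup.closure_induction
    (p := fun x _ => x ∈ gs.sprod (gs.sprod A B) C) ?_ ?_ hx
  · rintro _ ⟨a, ha, γ, t, ht, rfl⟩
    refine AddSubsemigroup.closure_induction
      (p := fun t _ => gs.tmul a γ t ∈ gs.sprod (gs.sprod A B) C) ?_ ?_ ht
    · rintro _ ⟨b, hb, δ, c, hc, rfl⟩
      rw [← gs.mul_assoc]
      exact gs.mem_sprod (gs.mem_sprod ha γ hb) δ hc
    · intro s t _ _ hps hpt
      rw [gs.left_distrib]
      exact gs.sprod_add hps hpt
  · intro x y _ _ hpx hpy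
    exact gs.sprod_add hpx hpy

private lemma sprod_assoc (gs : GammaSemiring M G) (A B C : Set M) :
    gs.sprod (gs.sprod A B) C = gs.sprod A (gs.sprod B C) :=
  Set.Subset.antisymm gs.sprod_subset_left gs.sprod_subset_right

private lemma sprod_self_subset (gs : GammaSemiring M G) {T : Set M}
    (hT : gs.IsSubGammaSemiring T) : gs.sprod T T ⊆ T := by
  intro x hx
  refine AddSubsemigroup.closure_induction (p := fun x _ => x ∈ T) ?_ ?_ hx
  · rintro _ ⟨a, ha, γ, b, hb, rfl⟩
    exact hT.2.2 a ha γ b hb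
  · intro x y _ _ hpx hpy
    exact hT.2.1 x hpx y hpy

end GammaSemiring

theorem stmt16 (gs : GammaSemiring M G) (B : Set M) (hB : gs.IsBiIdeal B) :
    (gs.IsGenBiIdeal B ∧ ∀ C : Set M, gs.IsGenBiIdeal C → C ⊆ B → C = B) ↔
      gs.GBSimpleIn B := by
  constructor
  · rintro ⟨-, hmin⟩ A ⟨hAne, hAB, hAprod⟩
    cases isEmpty_or_nonempty G with
    | inl hGempty =>
        refine hmin A ⟨hAne, ?_⟩ hAB
        rw [gs.sprod_empty_of_isEmpty]
        exact Set.empty_subset A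
    | inr hGne => ?_
    -- C := A Γ B Γ A is a generalized bi-Γ-ideal of M contained in A ⊆ B
    set C : Set M := gs.sprod (gs.sprod A B) A with hC
    have hCA : C ⊆ A := hAprod
    have hCB : C ⊆ B := hCA.trans hAB
    have hCne : C.Nonempty := gs.sprod_nonempty (gs.sprod_nonempty hAne hB.1.1) hAne
    -- show C Γ M Γ C ⊆ C
    have hgbi : gs.IsGenBiIdeal C := by
      refine ⟨hCne, ?_⟩
      -- rewrite (C Γ M) Γ C as A Γ (R) Γ A with R ⊆ B
      have h1 : gs.sprod (gs.sprod C Set.univ) C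
          ⊆ gs.sprod (gs.sprod A B) A := by
        have e1 : gs.sprod (gs.sprod C Set.univ) C
            = gs.sprod (gs.sprod A (gs.sprod (gs.sprod B (gs.sprod A Set.univ))
                (gs.sprod A B))) A := by
          rw [hC]
          rw [gs.sprod_assoc (gs.sprod A B) A Set.univ,
              gs.sprod_assoc A B (gs.sprod A Set.univ)]
          -- now LHS = sprod (sprod A Q) C with Q = sprod B (sprod A univ)
          rw [show gs.sprod (gs.sprod A (gs.sprod B (gs.sprod A Set.univ)))
                (gs.sprod (gs.sprod A B) A)
              = gs.sprod (gs.sprod (gs.sprod A (gs.sprod B (gs.sprod A Set.univ)))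
                (gs.sprod A B)) A from (gs.sprod_assoc _ _ _).symm]
          rw [gs.sprod_assoc A (gs.sprod B (gs.sprod A Set.univ)) (gs.sprod A B)]
        rw [e1]
        refine gs.sprod_mono (gs.sprod_mono (Set.Subset.refl A) ?_) (Set.Subset.refl A)
        -- R = B Γ (A Γ M) Γ (A Γ B) ⊆ B
        have hAMA : gs.sprod (gs.sprod A Set.univ) A ⊆ B :=
          (gs.sprod_mono (gs.sprod_mono hAB (Set.Subset.refl _)) hAB).trans hB.2
        have step : gs.sprod (gs.sprod B (gs.sprod A Set.univ)) (gs.sprod A B)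
            ⊆ B := by
          have e2 : gs.sprod (gs.sprod B (gs.sprod A Set.univ)) (gs.sprod A B)
              = gs.sprod B (gs.sprod (gs.sprod (gs.sprod A Set.univ) A) B) := by
            rw [gs.sprod_assoc B (gs.sprod A Set.univ) (gs.sprod A B),
                gs.sprod_assoc (gs.sprod A Set.univ) A B]
          rw [e2]
          have h3 : gs.sprod (gs.sprod (gs.sprod A Set.univ) A) B ⊆ B := by
            refine (gs.sprod_mono hAMA (Set.Subset.refl B)).trans
              (gs.sprod_self_subset hB.1)
          exact (gs.sprod_mono (Set.Subset.refl B) h3).trans (gs.sprod_self_subset hB.1)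
        rw [gs.sprod_assoc B (gs.sprod A Set.univ) (gs.sprod A B)] at step
        rw [gs.sprod_assoc B (gs.sprod A Set.univ) (gs.sprod A B)]
        exact step
      exact h1.trans hC.symm.subset
    have := hmin C hgbi hCB
    exact Set.Subset.antisymm hAB (this ▸ hCA)
  · intro hsimp
    have hBgbi : gs.IsGenBiIdeal B := ⟨hB.1.1, hB.2⟩
    refine ⟨hBgbi, fun C hC hCB => ?_⟩
    apply hsimp
    refine ⟨hC.1, hCB, ?_⟩
    exact (gs.sprod_mono (gs.sprod_mono (Set.Subset.refl C)
      (Set.subset_univ B)) (Set.Subset.refl C)).trans hC.2
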